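/- Let R be a Dedekind domain and let f : A → B be a normal homomorphism of R-flat Hopf algebras over R. Set I := B f(A)⁺ B. Then I = B f(A)⁺ = f(A)⁺ B, and I is a normal Hopf ideal of B: ε_B(I) = 0, Δ_B(I) ⊆ I⊗B + B⊗I (as submodules of B⊗B), S_B(I) ⊆ I, and for every a ∈ I the elements ∑ a₂ ⊗ S(a₁)a₃ and ∑ a₂ ⊗ a₁S(a₃) lie in the image of I ⊗ B in B ⊗ B. -/

import Mathlib

open TensorProduct

/-- The image of `M ⊗ N` in `B ⊗[R] B`, for submodules `M, N` of `B`. -/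
noncomputable def tmulSub {R B : Type*} [CommRing R] [AddCommGroup B] [Module R B]
    (M N : Submodule R B) : Submodule R (B ⊗[R] B) :=
  LinearMap.range (TensorProduct.map M.subtype N.subtype)

section HopfDefs

variable (R B : Type*) [CommRing R] [Ring B] [HopfAlgebra R B]

/-- The linear map `b ↦ ∑ b₁ a S(b₂)` (Sweedler notation). -/
noncomputable def lAd (a : B) : B →ₗ[R] B :=
  LinearMap.mul' R B ∘ₗ
    (TensorProduct.map LinearMap.id
      (LinearMap.mulLeft R a ∘ₗ (HopfAlgebra.antipode R : B →ₗ[R] B))) ∘ₗ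
      (Coalgebra.comul : B →ₗ[R] B ⊗[R] B)

/-- The linear map `b ↦ ∑ S(b₁) a b₂` (Sweedler notation). -/
noncomputable def rAd (a : B) : B →ₗ[R] B :=
  LinearMap.mul' R B ∘ₗ
    (TensorProduct.map
      (LinearMap.mulRight R a ∘ₗ (HopfAlgebra.antipode R : B →ₗ[R] B)) LinearMap.id) ∘ₗ
      (Coalgebra.comul : B →ₗ[R] B ⊗[R] B)

/-- An `R`-subalgebra `A` of the Hopf algebra `B` is a Hopf subalgebra if
`Δ(A) ⊆ A ⊗ A` and `S(A) ⊆ A`. -/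
def IsHopfSubalgebra (A : Subalgebra R B) : Prop :=
  (∀ a ∈ A, (Coalgebra.comul : B →ₗ[R] B ⊗[R] B) a ∈
      tmulSub (Subalgebra.toSubmodule A) (Subalgebra.toSubmodule A)) ∧
    ∀ a ∈ A, (HopfAlgebra.antipode R : B →ₗ[R] B) a ∈ A

/-- A subalgebra `A` of `B` is normal if `∑ b₁ a S(b₂) ∈ A` and `∑ S(b₁) a b₂ ∈ A`
for all `a ∈ A`, `b ∈ B`. -/
def IsNormalSubalgebra (A : Subalgebra R B) : Prop :=
  ∀ a ∈ A, ∀ b : B, lAd R B a b ∈ A ∧ rAd R B a b ∈ A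

end HopfDefs

/-- A submodule `N ⊆ M` is saturated if `M/N` is `R`-torsion-free, i.e. if
`r • b ∈ N` for some non-zero `r : R` implies `b ∈ N`. -/
def IsSaturatedIn {R M : Type*} [CommRing R] [AddCommGroup M] [Module R M]
    (N : Submodule R M) : Prop :=
  ∀ (r : R) (b : M), r ≠ 0 → r • b ∈ N → b ∈ N

open TensorProduct

section Sweedler

variable (R B : Type*) [CommRing R] [Ring B] [HopfAlgebra R B]

/-- The linear map `a ↦ ∑ a₂ ⊗ S(a₁)a₃` (Sweedler notation for the twofold
iterated comultiplication). -/
noncomputable def sweedlerConjL : B →ₗ[R] B ⊗[R] B :=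
  (TensorProduct.map LinearMap.id (LinearMap.mul' R B)) ∘ₗ
    (TensorProduct.assoc R B B B).toLinearMap ∘ₗ
      (TensorProduct.map
        ((TensorProduct.comm R B B).toLinearMap ∘ₗ
          TensorProduct.map (HopfAlgebra.antipode R : B →ₗ[R] B) LinearMap.id)
        LinearMap.id) ∘ₗ
        (TensorProduct.map (Coalgebra.comul : B →ₗ[R] B ⊗[R] B) LinearMap.id) ∘ₗ
          (Coalgebra.comul : B →ₗ[R] B ⊗[R] B)

/-- The linear map `a ↦ ∑ a₂ ⊗ a₁S(a₃)` (Sweedler notation for the twofold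
iterated comultiplication). -/
noncomputable def sweedlerConjR : B →ₗ[R] B ⊗[R] B :=
  (TensorProduct.map LinearMap.id (LinearMap.mul' R B)) ∘ₗ
    (TensorProduct.assoc R B B B).toLinearMap ∘ₗ
      (TensorProduct.map (TensorProduct.comm R B B).toLinearMap
        (HopfAlgebra.antipode R : B →ₗ[R] B)) ∘ₗ
        (TensorProduct.map (Coalgebra.comul : B →ₗ[R] B ⊗[R] B) LinearMap.id) ∘ₗ
          (Coalgebra.comul : B →ₗ[R] B ⊗[R] B)

end Sweedler

section AugSpans

variable {R A B : Type*} [CommRing R] [Ring A] [Ring B] [HopfAlgebra R A] [HopfAlgebra R B]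

/-- The two-sided ideal `B f(A)⁺ B` of `B`, as an `R`-submodule. -/
noncomputable def twoSidedAugSpan (f : A →ₐc[R] B) : Submodule R B :=
  Submodule.span R {x | ∃ (b : B) (a : A) (b' : B),
    (Coalgebra.counit : A →ₗ[R] R) a = 0 ∧ x = b * f a * b'}

/-- The left ideal `B f(A)⁺` of `B`, as an `R`-submodule. -/
noncomputable def leftAugSpan (f : A →ₐc[R] B) : Submodule R B :=
  Submodule.span R {x | ∃ (b : B) (a : A),
    (Coalgebra.counit : A →ₗ[R] R) a = 0 ∧ x = b * f a}

/-- The right ideal `f(A)⁺ B` of `B`, as an `R`-submodule. -/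
noncomputable def rightAugSpan (f : A →ₐc[R] B) : Submodule R B :=
  Submodule.span R {x | ∃ (a : A) (b : B),
    (Coalgebra.counit : A →ₗ[R] R) a = 0 ∧ x = f a * b}

end AugSpans

open Coalgebra HopfAlgebra



section CoalgHelpers

variable {ι κ Λ : Type*}

variable {R C : Type*} [CommRing R] [AddCommGroup C] [Module R C] [Coalgebra R C]

lemma repr_sum_counit_smul_right {c : C} (r : Repr R c ι) :
    ∑ i ∈ r.index, counit (R := R) (r.left i) • r.right i = c := by
  have h := sum_counit_tmul_eq r
  have h2 := congrArg (TensorProduct.lid R C) h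
  simp only [map_sum, lid_tmul] at h2
  simpa using h2

lemma repr_sum_counit_smul_left {c : C} (r : Repr R c ι) :
    ∑ i ∈ r.index, counit (R := R) (r.right i) • r.left i = c := by
  have h := sum_tmul_counit_eq r
  have h2 := congrArg (TensorProduct.rid R C) h
  simp only [map_sum, rid_tmul] at h2
  simpa using h2

end CoalgHelpers

section BialgHelpers

variable {ι κ Λ : Type*}

variable {R A B : Type*} [CommRing R] [Ring A] [Ring B] [Bialgebra R A] [Bialgebra R B]

/-- Product representation. -/
noncomputable def Coalgebra.Repr.mulRepr {x y : B} (rx : Repr R x ι) (ry : Repr R y κ) :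
    Repr R (x * y) (ι × κ) where
  index := rx.index ×ˢ ry.index
  left p := rx.left p.1 * ry.left p.2
  right p := rx.right p.1 * ry.right p.2
  eq := by
    rw [Bialgebra.comul_mul, ← rx.eq, ← ry.eq, Finset.sum_mul_sum]
    rw [Finset.sum_product]
    simp [Algebra.TensorProduct.tmul_mul_tmul]

/-- Pushforward representation along a bialgebra homomorphism. -/
noncomputable def Coalgebra.Repr.mapRepr {a : A} (r : Repr R a ι) (f : A →ₐc[R] B) :
    Repr R (f a) ι where
  index := r.index
  left i := f (r.left i)
  right i := f (r.right i)
  eq := by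
    have h2 := CoalgHomClass.map_comp_comul_apply (R := R) f a
    rw [← r.eq] at h2
    simp only [map_sum, TensorProduct.map_tmul] at h2
    simpa using h2

@[simp] lemma Coalgebra.Repr.mulRepr_index {x y : B} (rx : Repr R x ι) (ry : Repr R y κ) :
    (rx.mulRepr ry).index = rx.index ×ˢ ry.index := rfl

end BialgHelpers



section TripleEq

variable {ι κ Λ : Type*}

variable {R C B : Type*} [CommRing R] [AddCommGroup C] [Module R C] [Coalgebra R C]
  [Ring B] [Algebra R B]

/-- Coassociativity, applied to a triple of linear maps multiplied together. -/
lemma triple_eq {c : C} (r : Repr R c ι) (r1 : ∀ i : r.ι, Repr R (r.left i) κ)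
    (r2 : ∀ i : r.ι, Repr R (r.right i) Λ) (f g h : C →ₗ[R] B) :
    ∑ i ∈ r.index, ∑ k ∈ (r1 i).index,
        f ((r1 i).left k) * (g ((r1 i).right k) * h (r.right i)) =
      ∑ i ∈ r.index, ∑ l ∈ (r2 i).index,
        f (r.left i) * (g ((r2 i).left l) * h ((r2 i).right l)) := by
  have key := sum_tmul_tmul_eq r r1 r2
  have := congrArg (LinearMap.mul' R B ∘ₗ
    TensorProduct.map f (LinearMap.mul' R B ∘ₗ TensorProduct.map g h)) key
  simpa [map_sum, LinearMap.mul'_apply] using this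

end TripleEq

section HopfHelpers

variable {ι κ Λ : Type*}

variable {R B : Type*} [CommRing R] [Ring B] [HopfAlgebra R B]

lemma antipode_one' : antipode (R := R) (1 : B) = 1 := by
  have h := mul_antipode_rTensor_comul_apply (R := R) (1 : B)
  rw [Bialgebra.comul_one] at h
  simpa [Algebra.TensorProduct.one_def] using h

lemma counit_antipode' (x : B) :
    counit (R := R) (antipode (R := R) x) = counit (R := R) x := by
  let r := ℛ R x
  have h1 : antipode (R := R) x =
      ∑ i ∈ r.index, counit (R := R) (r.right i) • antipode (R := R) (r.left i) := by
    conv_lhs => rw [← repr_sum_counit_smul_left r]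
    simp [map_sum]
  have h2 := congrArg (counit (R := R)) (sum_antipode_mul_eq_algebraMap_counit (R := R) r)
  simp only [map_sum, Bialgebra.counit_mul] at h2
  rw [h1]
  simp only [map_sum, LinearMap.map_smul]
  rw [show (counit (R := R) (algebraMap R B (counit (R := R) x))) = counit (R := R) x by
    simp [Algebra.algebraMap_eq_smul_one]] at h2
  rw [← h2]
  apply Finset.sum_congr rfl
  intro i _
  simp [smul_eq_mul, mul_comm]

lemma sum_antipode_mul_mul {x y : B} (rx : Repr R x ι) (ry : Repr R y κ) :
    ∑ i ∈ rx.index, ∑ j ∈ ry.index,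
      antipode (R := R) (rx.left i * ry.left j) * (rx.right i * ry.right j) =
      algebraMap R B (counit (R := R) x * counit (R := R) y) := by
  have h := sum_antipode_mul_eq_algebraMap_counit (R := R) (rx.mulRepr ry)
  simp only [Coalgebra.Repr.mulRepr, Bialgebra.counit_mul] at h
  rw [← h, ← Finset.sum_product']

lemma sum_mul_mul_antipode {x y : B} (rx : Repr R x ι) (ry : Repr R y κ) :
    ∑ i ∈ rx.index, ∑ j ∈ ry.index,
      (rx.left i * ry.left j) * antipode (R := R) (rx.right i * ry.right j) =
      algebraMap R B (counit (R := R) x * counit (R := R) y) := by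
  have h := sum_mul_antipode_eq_algebraMap_counit (R := R) (rx.mulRepr ry)
  simp only [Coalgebra.Repr.mulRepr, Bialgebra.counit_mul] at h
  rw [← h, ← Finset.sum_product']

end HopfHelpers



section SumReorder

variable {M : Type*} [AddCommMonoid M] {ι κ : Type*} {X : ι → Type*} {Y : κ → Type*}

lemma sum4_swap_mid (s : Finset ι) (t : Finset κ) (u : ∀ i, Finset (X i))
    (v : ∀ j, Finset (Y j)) (f : ∀ i, ∀ j, X i → Y j → M) :
    ∑ i ∈ s, ∑ j ∈ t, ∑ k ∈ u i, ∑ l ∈ v j, f i j k l =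
      ∑ i ∈ s, ∑ k ∈ u i, ∑ j ∈ t, ∑ l ∈ v j, f i j k l :=
  Finset.sum_congr rfl fun i _ => Finset.sum_comm

lemma sum4_swap_pairs (s : Finset ι) (t : Finset κ) (u : ∀ i, Finset (X i))
    (v : ∀ j, Finset (Y j)) (f : ∀ i, ∀ j, X i → Y j → M) :
    ∑ i ∈ s, ∑ k ∈ u i, ∑ j ∈ t, ∑ l ∈ v j, f i j k l =
      ∑ j ∈ t, ∑ l ∈ v j, ∑ i ∈ s, ∑ k ∈ u i, f i j k l :=
  calc ∑ i ∈ s, ∑ k ∈ u i, ∑ j ∈ t, ∑ l ∈ v j, f i j k l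
      = ∑ i ∈ s, ∑ j ∈ t, ∑ k ∈ u i, ∑ l ∈ v j, f i j k l :=
        Finset.sum_congr rfl fun i _ => Finset.sum_comm
    _ = ∑ i ∈ s, ∑ j ∈ t, ∑ l ∈ v j, ∑ k ∈ u i, f i j k l :=
        Finset.sum_congr rfl fun i _ => Finset.sum_congr rfl fun j _ =>
          Finset.sum_comm
    _ = ∑ j ∈ t, ∑ i ∈ s, ∑ l ∈ v j, ∑ k ∈ u i, f i j k l := Finset.sum_comm
    _ = ∑ j ∈ t, ∑ l ∈ v j, ∑ i ∈ s, ∑ k ∈ u i, f i j k l :=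
        Finset.sum_congr rfl fun j _ => Finset.sum_comm

end SumReorder

section AntipodeMul

variable {R B : Type*} [CommRing R] [Ring B] [HopfAlgebra R B]

local notation "S" => (antipode (R := R) (A := B))

lemma antipode_mul' (x y : B) :
    antipode (R := R) (x * y) = antipode (R := R) y * antipode (R := R) x := by
  classical
  set rx := ℛ R x with hrx
  set ry := ℛ R y with hry
  let rx1 : ∀ i : rx.ι, Repr R (rx.left i) _ := fun i => ℛ R (rx.left i)
  let ry1 : ∀ j : ry.ι, Repr R (ry.left j) _ := fun j => ℛ R (ry.left j)
  let rx2 : ∀ i : rx.ι, Repr R (rx.right i) _ := fun i => ℛ R (rx.right i)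
  let ry2 : ∀ j : ry.ι, Repr R (ry.right j) _ := fun j => ℛ R (ry.right j)
  set M : B := ∑ i ∈ rx.index, ∑ j ∈ ry.index, ∑ k ∈ (rx2 i).index, ∑ l ∈ (ry2 j).index,
      S (rx.left i * ry.left j) *
        (((rx2 i).left k * (ry2 j).left l) *
          (S ((ry2 j).right l) * S ((rx2 i).right k))) with hM
  -- Step B : M = S (x * y)
  have hB : M = S (x * y) := by
    have hcollapse : ∀ i ∈ rx.index, ∀ j ∈ ry.index,
        ∑ k ∈ (rx2 i).index, ∑ l ∈ (ry2 j).index,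
          S (rx.left i * ry.left j) *
            (((rx2 i).left k * (ry2 j).left l) *
              (S ((ry2 j).right l) * S ((rx2 i).right k))) =
          (counit (R := R) (rx.right i) * counit (R := R) (ry.right j)) •
            S (rx.left i * ry.left j) := by
      intro i _ j _
      have h1 : ∀ k ∈ (rx2 i).index,
          ∑ l ∈ (ry2 j).index,
            ((rx2 i).left k * (ry2 j).left l) *
              (S ((ry2 j).right l) * S ((rx2 i).right k)) =
          counit (R := R) (ry.right j) • ((rx2 i).left k * S ((rx2 i).right k)) := by
        intro k _
        have hrearr : ∀ l ∈ (ry2 j).index,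
            ((rx2 i).left k * (ry2 j).left l) *
              (S ((ry2 j).right l) * S ((rx2 i).right k)) =
            (rx2 i).left k *
              (((ry2 j).left l * S ((ry2 j).right l)) * S ((rx2 i).right k)) := by
          intro l _; simp only [mul_assoc]
        rw [Finset.sum_congr rfl hrearr, ← Finset.mul_sum, ← Finset.sum_mul,
          sum_mul_antipode_eq_algebraMap_counit (ry2 j), Algebra.smul_def]
        rw [← mul_assoc, ← Algebra.commutes, mul_assoc]
      calc ∑ k ∈ (rx2 i).index, ∑ l ∈ (ry2 j).index,
            S (rx.left i * ry.left j) *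
              (((rx2 i).left k * (ry2 j).left l) *
                (S ((ry2 j).right l) * S ((rx2 i).right k)))
          = S (rx.left i * ry.left j) *
              ∑ k ∈ (rx2 i).index, ∑ l ∈ (ry2 j).index,
                (((rx2 i).left k * (ry2 j).left l) *
                  (S ((ry2 j).right l) * S ((rx2 i).right k))) := by
            rw [Finset.mul_sum]
            exact Finset.sum_congr rfl fun k hk => by rw [Finset.mul_sum]
        _ = S (rx.left i * ry.left j) *
              (counit (R := R) (ry.right j) • ∑ k ∈ (rx2 i).index,
                ((rx2 i).left k * S ((rx2 i).right k))) := by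
            rw [Finset.sum_congr rfl h1, ← Finset.smul_sum]
        _ = (counit (R := R) (rx.right i) * counit (R := R) (ry.right j)) •
              S (rx.left i * ry.left j) := by
            rw [sum_mul_antipode_eq_algebraMap_counit (rx2 i), Algebra.smul_def, Algebra.smul_def]
            rw [← map_mul, Algebra.commutes, mul_comm (counit (R := R) (ry.right j))]
    have hxy : x * y = ∑ i ∈ rx.index, ∑ j ∈ ry.index,
        (counit (R := R) (rx.right i) * counit (R := R) (ry.right j)) •
          (rx.left i * ry.left j) := by
      conv_lhs => rw [← repr_sum_counit_smul_left rx, ← repr_sum_counit_smul_left ry]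
      rw [Finset.sum_mul_sum]
      exact Finset.sum_congr rfl fun i _ => Finset.sum_congr rfl fun j _ => by
        rw [smul_mul_assoc, mul_smul_comm, smul_smul]
    rw [hM, hxy, map_sum]
    refine Finset.sum_congr rfl fun i hi => ?_
    rw [map_sum]
    refine Finset.sum_congr rfl fun j hj => ?_
    rw [LinearMap.map_smul]
    exact hcollapse i hi j hj
  -- Step C : M = S y * S x
  have hC : M = antipode (R := R) y * antipode (R := R) x := by
    have hE1 : antipode (R := R) y * antipode (R := R) x =
        ∑ i ∈ rx.index, ∑ j ∈ ry.index, ∑ k ∈ (rx1 i).index, ∑ l ∈ (ry1 j).index,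
          S ((rx1 i).left k * (ry1 j).left l) *
            (((rx1 i).right k * (ry1 j).right l) *
              (S (ry.right j) * S (rx.right i))) := by
      have hx : antipode (R := R) x =
          ∑ i ∈ rx.index, counit (R := R) (rx.left i) • S (rx.right i) := by
        conv_lhs => rw [← repr_sum_counit_smul_right rx]
        rw [map_sum]
        exact Finset.sum_congr rfl fun i _ => by rw [LinearMap.map_smul]
      have hy : antipode (R := R) y =
          ∑ j ∈ ry.index, counit (R := R) (ry.left j) • S (ry.right j) := by
        conv_lhs => rw [← repr_sum_counit_smul_right ry]
        rw [map_sum]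
        exact Finset.sum_congr rfl fun j _ => by rw [LinearMap.map_smul]
      rw [hx, hy, Finset.sum_mul_sum, Finset.sum_comm]
      refine Finset.sum_congr rfl fun i _ => Finset.sum_congr rfl fun j _ => ?_
      rw [smul_mul_assoc, mul_smul_comm, smul_smul,
        mul_comm (counit (R := R) (ry.left j)) (counit (R := R) (rx.left i)),
        Algebra.smul_def, ← sum_antipode_mul_mul (rx1 i) (ry1 j), Finset.sum_mul]
      refine Finset.sum_congr rfl fun k _ => ?_
      rw [Finset.sum_mul]
      refine Finset.sum_congr rfl fun l _ => ?_
      rw [mul_assoc]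
    have hyconv : ∀ (i : rx.ι) (k : (rx1 i).ι),
        ∑ j ∈ ry.index, ∑ l ∈ (ry1 j).index,
          S ((rx1 i).left k * (ry1 j).left l) *
            (((rx1 i).right k * (ry1 j).right l) *
              (S (ry.right j) * S (rx.right i))) =
        ∑ j ∈ ry.index, ∑ l ∈ (ry2 j).index,
          S ((rx1 i).left k * ry.left j) *
            (((rx1 i).right k * (ry2 j).left l) *
              (S ((ry2 j).right l) * S (rx.right i))) := by
      intro i k
      have := triple_eq ry ry1 ry2
        ((antipode (R := R)) ∘ₗ LinearMap.mulLeft R ((rx1 i).left k))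
        (LinearMap.mulLeft R ((rx1 i).right k))
        ((LinearMap.mulRight R (S (rx.right i))) ∘ₗ (antipode (R := R)))
      simpa only [LinearMap.coe_comp, Function.comp_apply, LinearMap.mulLeft_apply,
        LinearMap.mulRight_apply] using this
    have hxconv : ∀ (j : ry.ι) (l : (ry2 j).ι),
        ∑ i ∈ rx.index, ∑ k ∈ (rx1 i).index,
          S ((rx1 i).left k * ry.left j) *
            (((rx1 i).right k * (ry2 j).left l) *
              (S ((ry2 j).right l) * S (rx.right i))) =
        ∑ i ∈ rx.index, ∑ k ∈ (rx2 i).index,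
          S (rx.left i * ry.left j) *
            (((rx2 i).left k * (ry2 j).left l) *
              (S ((ry2 j).right l) * S ((rx2 i).right k))) := by
      intro j l
      have := triple_eq rx rx1 rx2
        ((antipode (R := R)) ∘ₗ LinearMap.mulRight R (ry.left j))
        (LinearMap.mulRight R ((ry2 j).left l))
        ((LinearMap.mulLeft R (S ((ry2 j).right l))) ∘ₗ (antipode (R := R)))
      simpa only [LinearMap.coe_comp, Function.comp_apply, LinearMap.mulLeft_apply,
        LinearMap.mulRight_apply] using this
    symm
    calc antipode (R := R) y * antipode (R := R) x
        = ∑ i ∈ rx.index, ∑ j ∈ ry.index, ∑ k ∈ (rx1 i).index, ∑ l ∈ (ry1 j).index,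
            S ((rx1 i).left k * (ry1 j).left l) *
              (((rx1 i).right k * (ry1 j).right l) *
                (S (ry.right j) * S (rx.right i))) := hE1
      _ = ∑ i ∈ rx.index, ∑ k ∈ (rx1 i).index, ∑ j ∈ ry.index, ∑ l ∈ (ry1 j).index,
            S ((rx1 i).left k * (ry1 j).left l) *
              (((rx1 i).right k * (ry1 j).right l) *
                (S (ry.right j) * S (rx.right i))) :=
          sum4_swap_mid rx.index ry.index (fun i => (rx1 i).index)
            (fun j => (ry1 j).index) _
      _ = ∑ i ∈ rx.index, ∑ k ∈ (rx1 i).index, ∑ j ∈ ry.index, ∑ l ∈ (ry2 j).index,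
            S ((rx1 i).left k * ry.left j) *
              (((rx1 i).right k * (ry2 j).left l) *
                (S ((ry2 j).right l) * S (rx.right i))) :=
          Finset.sum_congr rfl fun i _ => Finset.sum_congr rfl fun k _ => hyconv i k
      _ = ∑ j ∈ ry.index, ∑ l ∈ (ry2 j).index, ∑ i ∈ rx.index, ∑ k ∈ (rx1 i).index,
            S ((rx1 i).left k * ry.left j) *
              (((rx1 i).right k * (ry2 j).left l) *
                (S ((ry2 j).right l) * S (rx.right i))) :=
          sum4_swap_pairs rx.index ry.index (fun i => (rx1 i).index)
            (fun j => (ry2 j).index) _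
      _ = ∑ j ∈ ry.index, ∑ l ∈ (ry2 j).index, ∑ i ∈ rx.index, ∑ k ∈ (rx2 i).index,
            S (rx.left i * ry.left j) *
              (((rx2 i).left k * (ry2 j).left l) *
                (S ((ry2 j).right l) * S ((rx2 i).right k))) :=
          Finset.sum_congr rfl fun j _ => Finset.sum_congr rfl fun l _ => hxconv j l
      _ = ∑ i ∈ rx.index, ∑ k ∈ (rx2 i).index, ∑ j ∈ ry.index, ∑ l ∈ (ry2 j).index,
            S (rx.left i * ry.left j) *
              (((rx2 i).left k * (ry2 j).left l) *
                (S ((ry2 j).right l) * S ((rx2 i).right k))) :=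
          (sum4_swap_pairs rx.index ry.index (fun i => (rx2 i).index)
            (fun j => (ry2 j).index) _).symm
      _ = M :=
          (sum4_swap_mid rx.index ry.index (fun i => (rx2 i).index)
            (fun j => (ry2 j).index) _).symm
  rw [← hB, hC]

end AntipodeMul



section MapAntipode

variable {R A B : Type*} [CommRing R] [Ring A] [Ring B] [HopfAlgebra R A] [HopfAlgebra R B]

lemma map_antipode' (f : A →ₐc[R] B) (a : A) :
    antipode (R := R) (f a) = f (antipode (R := R) a) := by
  classical
  set ra := ℛ R a with hra
  let ra1 : ∀ i : ra.ι, Repr R (ra.left i) _ := fun i => ℛ R (ra.left i)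
  let ra2 : ∀ i : ra.ι, Repr R (ra.right i) _ := fun i => ℛ R (ra.right i)
  have key := triple_eq (B := B) ra ra1 ra2
    ((antipode (R := R)) ∘ₗ (f : A →ₗ[R] B))
    (f : A →ₗ[R] B)
    ((f : A →ₗ[R] B) ∘ₗ (antipode (R := R)))
  simp only [LinearMap.coe_comp, Function.comp_apply, LinearMap.coe_coe] at key
  have hW2 : ∑ i ∈ ra.index, ∑ k ∈ (ra1 i).index,
      antipode (R := R) (f ((ra1 i).left k)) *
        (f ((ra1 i).right k) * f (antipode (R := R) (ra.right i))) =
      f (antipode (R := R) a) := by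
    have hinner : ∀ i ∈ ra.index,
        ∑ k ∈ (ra1 i).index, antipode (R := R) (f ((ra1 i).left k)) *
          (f ((ra1 i).right k) * f (antipode (R := R) (ra.right i))) =
        counit (R := R) (ra.left i) • f (antipode (R := R) (ra.right i)) := by
      intro i _
      have h1 : ∀ k ∈ (ra1 i).index,
          antipode (R := R) (f ((ra1 i).left k)) *
            (f ((ra1 i).right k) * f (antipode (R := R) (ra.right i))) =
          (antipode (R := R) (f ((ra1 i).left k)) * f ((ra1 i).right k)) *
            f (antipode (R := R) (ra.right i)) := by
        intro k _; rw [mul_assoc]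
      rw [Finset.sum_congr rfl h1, ← Finset.sum_mul]
      have h2 := sum_antipode_mul_eq_algebraMap_counit (R := R) ((ra1 i).mapRepr f)
      simp only [Coalgebra.Repr.mapRepr] at h2
      rw [h2, CoalgHomClass.counit_comp_apply, ← Algebra.smul_def]
    rw [Finset.sum_congr rfl hinner]
    conv_rhs => rw [← repr_sum_counit_smul_right ra]
    simp only [map_sum, map_smul]
  have hW1 : ∑ i ∈ ra.index, ∑ l ∈ (ra2 i).index,
      antipode (R := R) (f (ra.left i)) *
        (f ((ra2 i).left l) * f (antipode (R := R) ((ra2 i).right l))) =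
      antipode (R := R) (f a) := by
    have hinner : ∀ i ∈ ra.index,
        ∑ l ∈ (ra2 i).index, antipode (R := R) (f (ra.left i)) *
          (f ((ra2 i).left l) * f (antipode (R := R) ((ra2 i).right l))) =
        counit (R := R) (ra.right i) • antipode (R := R) (f (ra.left i)) := by
      intro i _
      rw [← Finset.mul_sum]
      have h2 : ∑ l ∈ (ra2 i).index,
          f ((ra2 i).left l) * f (antipode (R := R) ((ra2 i).right l)) =
          algebraMap R B (counit (R := R) (ra.right i)) := by
        have h3 : ∀ l ∈ (ra2 i).index,
            f ((ra2 i).left l) * f (antipode (R := R) ((ra2 i).right l)) =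
            f ((ra2 i).left l * antipode (R := R) ((ra2 i).right l)) :=
          fun l _ => (map_mul f _ _).symm
        rw [Finset.sum_congr rfl h3, ← map_sum f, sum_mul_antipode_eq_algebraMap_counit (ra2 i),
          AlgHomClass.commutes]
      rw [h2, ← Algebra.commutes, ← Algebra.smul_def]
    rw [Finset.sum_congr rfl hinner]
    conv_rhs => rw [← repr_sum_counit_smul_left ra]
    simp only [map_sum, map_smul]
  rw [← hW2, ← hW1]
  exact key.symm

end MapAntipode

section EvalLemmas

variable {ι κ Λ : Type*}

variable {R B : Type*} [CommRing R] [Ring B] [HopfAlgebra R B]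

open Coalgebra HopfAlgebra

lemma rAd_repr (z : B) {c : B} (r : Repr R c ι) :
    rAd R B z c = ∑ i ∈ r.index, (antipode (R := R) (r.left i) * z) * r.right i := by
  rw [rAd]
  simp only [LinearMap.coe_comp, Function.comp_apply]
  rw [← r.eq, map_sum, map_sum]
  simp [LinearMap.mul'_apply]

lemma lAd_repr (z : B) {c : B} (r : Repr R c ι) :
    lAd R B z c = ∑ i ∈ r.index, r.left i * (z * antipode (R := R) (r.right i)) := by
  rw [lAd]
  simp only [LinearMap.coe_comp, Function.comp_apply]
  rw [← r.eq, map_sum, map_sum]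
  simp [LinearMap.mul'_apply]

lemma sweedlerConjL_repr {x : B} (r : Repr R x ι) (r1 : ∀ i : r.ι, Repr R (r.left i) κ) :
    sweedlerConjL R B x = ∑ i ∈ r.index, ∑ k ∈ (r1 i).index,
      (r1 i).right k ⊗ₜ[R] (antipode (R := R) ((r1 i).left k) * r.right i) := by
  rw [sweedlerConjL]
  simp only [LinearMap.coe_comp, Function.comp_apply, LinearEquiv.coe_coe]
  rw [← r.eq, map_sum, map_sum, map_sum, map_sum]
  refine Finset.sum_congr rfl fun i _ => ?_
  rw [TensorProduct.map_tmul, LinearMap.id_coe, id_eq, ← (r1 i).eq, TensorProduct.sum_tmul,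
    map_sum, map_sum, map_sum]
  refine Finset.sum_congr rfl fun k _ => ?_
  simp [LinearMap.mul'_apply]

lemma sweedlerConjR_repr {x : B} (r : Repr R x ι) (r1 : ∀ i : r.ι, Repr R (r.left i) κ) :
    sweedlerConjR R B x = ∑ i ∈ r.index, ∑ k ∈ (r1 i).index,
      (r1 i).right k ⊗ₜ[R] ((r1 i).left k * antipode (R := R) (r.right i)) := by
  rw [sweedlerConjR]
  simp only [LinearMap.coe_comp, Function.comp_apply, LinearEquiv.coe_coe]
  rw [← r.eq, map_sum, map_sum, map_sum, map_sum]
  refine Finset.sum_congr rfl fun i _ => ?_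
  rw [TensorProduct.map_tmul, LinearMap.id_coe, id_eq, ← (r1 i).eq, TensorProduct.sum_tmul,
    map_sum, map_sum, map_sum]
  refine Finset.sum_congr rfl fun k _ => ?_
  simp [LinearMap.mul'_apply]

lemma counit_rAd (z : B) (c : B) :
    counit (R := R) (rAd R B z c) = counit (R := R) z * counit (R := R) c := by
  rw [rAd_repr z (ℛ R c), map_sum]
  have h : ∀ i ∈ (ℛ R c).index,
      counit (R := R) ((antipode (R := R) ((ℛ R c).left i) * z) * (ℛ R c).right i) =
      counit (R := R) z *
        (counit (R := R) ((ℛ R c).left i) * counit (R := R) ((ℛ R c).right i)) := by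
    intro i _
    rw [Bialgebra.counit_mul, Bialgebra.counit_mul, counit_antipode']
    ring
  rw [Finset.sum_congr rfl h, ← Finset.mul_sum]
  congr 1
  have := congrArg (counit (R := R)) (repr_sum_counit_smul_right (ℛ R c))
  simpa [map_sum, smul_eq_mul] using this

lemma counit_lAd (z : B) (c : B) :
    counit (R := R) (lAd R B z c) = counit (R := R) z * counit (R := R) c := by
  rw [lAd_repr z (ℛ R c), map_sum]
  have h : ∀ i ∈ (ℛ R c).index,
      counit (R := R) ((ℛ R c).left i * (z * antipode (R := R) ((ℛ R c).right i))) =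
      counit (R := R) z *
        (counit (R := R) ((ℛ R c).left i) * counit (R := R) ((ℛ R c).right i)) := by
    intro i _
    rw [Bialgebra.counit_mul, Bialgebra.counit_mul, counit_antipode']
    ring
  rw [Finset.sum_congr rfl h, ← Finset.mul_sum]
  congr 1
  have := congrArg (counit (R := R)) (repr_sum_counit_smul_right (ℛ R c))
  simpa [map_sum, smul_eq_mul] using this

end EvalLemmas

section SpanLemmas

open Coalgebra HopfAlgebra

variable {R A B : Type*} [CommRing R] [Ring A] [Ring B] [HopfAlgebra R A] [HopfAlgebra R B]

lemma mem_two_gen (f : A →ₐc[R] B) (b : B) (a : A) (b' : B)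
    (ha : counit (R := R) a = 0) : b * f a * b' ∈ twoSidedAugSpan f :=
  Submodule.subset_span ⟨b, a, b', ha, rfl⟩

lemma two_mul_left (f : A →ₐc[R] B) (z : B) {x : B} (hx : x ∈ twoSidedAugSpan f) :
    z * x ∈ twoSidedAugSpan f := by
  induction hx using Submodule.span_induction with
  | mem x hx =>
      obtain ⟨b, a, b', ha, rfl⟩ := hx
      rw [show z * (b * f a * b') = (z * b) * f a * b' by simp only [mul_assoc]]
      exact mem_two_gen f _ _ _ ha
  | zero => simpa using (twoSidedAugSpan f).zero_mem
  | add u v _ _ hu hv => rw [mul_add]; exact add_mem hu hv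
  | smul r u _ hu => rw [mul_smul_comm]; exact Submodule.smul_mem _ r hu

lemma two_mul_right (f : A →ₐc[R] B) (z : B) {x : B} (hx : x ∈ twoSidedAugSpan f) :
    x * z ∈ twoSidedAugSpan f := by
  induction hx using Submodule.span_induction with
  | mem x hx =>
      obtain ⟨b, a, b', ha, rfl⟩ := hx
      rw [mul_assoc]
      exact mem_two_gen f b a (b' * z) ha
  | zero => simpa using (twoSidedAugSpan f).zero_mem
  | add u v _ _ hu hv => rw [add_mul]; exact add_mem hu hv
  | smul r u _ hu => rw [smul_mul_assoc]; exact Submodule.smul_mem _ r hu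

lemma left_mul_leftAug (f : A →ₐc[R] B) (z : B) {x : B} (hx : x ∈ leftAugSpan f) :
    z * x ∈ leftAugSpan f := by
  induction hx using Submodule.span_induction with
  | mem x hx =>
      obtain ⟨b, a, ha, rfl⟩ := hx
      rw [← mul_assoc]
      exact Submodule.subset_span ⟨z * b, a, ha, rfl⟩
  | zero => simpa using (leftAugSpan f).zero_mem
  | add u v _ _ hu hv => rw [mul_add]; exact add_mem hu hv
  | smul r u _ hu => rw [mul_smul_comm]; exact Submodule.smul_mem _ r hu

lemma right_mul_rightAug (f : A →ₐc[R] B) (z : B) {x : B} (hx : x ∈ rightAugSpan f) :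
    x * z ∈ rightAugSpan f := by
  induction hx using Submodule.span_induction with
  | mem x hx =>
      obtain ⟨a, b, ha, rfl⟩ := hx
      rw [mul_assoc]
      exact Submodule.subset_span ⟨a, b * z, ha, rfl⟩
  | zero => simpa using (rightAugSpan f).zero_mem
  | add u v _ _ hu hv => rw [add_mul]; exact add_mem hu hv
  | smul r u _ hu => rw [smul_mul_assoc]; exact Submodule.smul_mem _ r hu

lemma counit_two (f : A →ₐc[R] B) {x : B} (hx : x ∈ twoSidedAugSpan f) :
    counit (R := R) x = 0 := by
  induction hx using Submodule.span_induction with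
  | mem x hx =>
      obtain ⟨b, a, b', ha, rfl⟩ := hx
      rw [Bialgebra.counit_mul, Bialgebra.counit_mul, CoalgHomClass.counit_comp_apply, ha]
      ring
  | zero => simp
  | add u v _ _ hu hv => rw [map_add, hu, hv, add_zero]
  | smul r u _ hu => rw [map_smul, hu, smul_zero]

lemma key_left (f : A →ₐc[R] B) (a : A) (ha : counit (R := R) a = 0)
    (hn : ∀ b : B, rAd R B (f a) b ∈ Set.range f) (c : B) :
    f a * c ∈ leftAugSpan f := by
  classical
  set r := ℛ R c with hr
  let r1 : ∀ i : r.ι, Repr R (r.left i) _ := fun i => ℛ R (r.left i)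
  let r2 : ∀ i : r.ι, Repr R (r.right i) _ := fun i => ℛ R (r.right i)
  have key := triple_eq (B := B) r r1 r2 (LinearMap.id)
    ((LinearMap.mulRight R (f a)) ∘ₗ (antipode (R := R))) (LinearMap.id)
  simp only [LinearMap.coe_comp, Function.comp_apply, LinearMap.id_coe, id_eq,
    LinearMap.mulRight_apply] at key
  have hlhs : ∑ i ∈ r.index, ∑ k ∈ (r1 i).index,
      (r1 i).left k * ((antipode (R := R) ((r1 i).right k) * f a) * r.right i) =
      f a * c := by
    have hinner : ∀ i ∈ r.index,
        ∑ k ∈ (r1 i).index,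
          (r1 i).left k * ((antipode (R := R) ((r1 i).right k) * f a) * r.right i) =
        counit (R := R) (r.left i) • (f a * r.right i) := by
      intro i _
      have hre : ∀ k ∈ (r1 i).index,
          (r1 i).left k * ((antipode (R := R) ((r1 i).right k) * f a) * r.right i) =
          ((r1 i).left k * antipode (R := R) ((r1 i).right k)) * (f a * r.right i) := by
        intro k _; simp only [mul_assoc]
      rw [Finset.sum_congr rfl hre, ← Finset.sum_mul, sum_mul_antipode_eq_algebraMap_counit (r1 i),
        ← Algebra.smul_def]
    rw [Finset.sum_congr rfl hinner]
    have : ∀ i ∈ r.index, counit (R := R) (r.left i) • (f a * r.right i) =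
        f a * (counit (R := R) (r.left i) • r.right i) := by
      intro i _; rw [mul_smul_comm]
    rw [Finset.sum_congr rfl this, ← Finset.mul_sum, repr_sum_counit_smul_right r]
  have hid : f a * c = ∑ i ∈ r.index, r.left i * rAd R B (f a) (r.right i) := by
    rw [← hlhs, key]
    refine Finset.sum_congr rfl fun i _ => ?_
    rw [rAd_repr (f a) (r2 i), Finset.mul_sum]
  rw [hid]
  refine Submodule.sum_mem _ fun i _ => ?_
  obtain ⟨t, ht⟩ := hn (r.right i)
  rw [← ht]
  refine Submodule.subset_span ⟨r.left i, t, ?_, rfl⟩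
  have h1 : counit (R := R) (f t) = 0 := by
    rw [ht, counit_rAd, CoalgHomClass.counit_comp_apply, ha, zero_mul]
  rwa [CoalgHomClass.counit_comp_apply] at h1

lemma key_right (f : A →ₐc[R] B) (a : A) (ha : counit (R := R) a = 0)
    (hn : ∀ b : B, lAd R B (f a) b ∈ Set.range f) (c : B) :
    c * f a ∈ rightAugSpan f := by
  classical
  set r := ℛ R c with hr
  let r1 : ∀ i : r.ι, Repr R (r.left i) _ := fun i => ℛ R (r.left i)
  let r2 : ∀ i : r.ι, Repr R (r.right i) _ := fun i => ℛ R (r.right i)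
  have key := triple_eq (B := B) r r1 r2 (LinearMap.id)
    ((LinearMap.mulLeft R (f a)) ∘ₗ (antipode (R := R))) (LinearMap.id)
  simp only [LinearMap.coe_comp, Function.comp_apply, LinearMap.id_coe, id_eq,
    LinearMap.mulLeft_apply] at key
  have hrhs : ∑ i ∈ r.index, ∑ l ∈ (r2 i).index,
      r.left i * ((f a * antipode (R := R) ((r2 i).left l)) * (r2 i).right l) =
      c * f a := by
    have hinner : ∀ i ∈ r.index,
        ∑ l ∈ (r2 i).index,
          r.left i * ((f a * antipode (R := R) ((r2 i).left l)) * (r2 i).right l) =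
        counit (R := R) (r.right i) • (r.left i * f a) := by
      intro i _
      have hre : ∀ l ∈ (r2 i).index,
          r.left i * ((f a * antipode (R := R) ((r2 i).left l)) * (r2 i).right l) =
          r.left i * (f a * (antipode (R := R) ((r2 i).left l) * (r2 i).right l)) := by
        intro l _; simp only [mul_assoc]
      rw [Finset.sum_congr rfl hre, ← Finset.mul_sum, ← Finset.mul_sum,
        sum_antipode_mul_eq_algebraMap_counit (r2 i), ← Algebra.commutes, ← Algebra.smul_def, mul_smul_comm]
    rw [Finset.sum_congr rfl hinner]
    have : ∀ i ∈ r.index, counit (R := R) (r.right i) • (r.left i * f a) =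
        (counit (R := R) (r.right i) • r.left i) * f a := by
      intro i _; rw [smul_mul_assoc]
    rw [Finset.sum_congr rfl this, ← Finset.sum_mul, repr_sum_counit_smul_left r]
  have hid : c * f a = ∑ i ∈ r.index, lAd R B (f a) (r.left i) * r.right i := by
    rw [← hrhs, ← key]
    refine Finset.sum_congr rfl fun i _ => ?_
    rw [lAd_repr (f a) (r1 i), Finset.sum_mul]
    exact Finset.sum_congr rfl fun k _ => by simp only [mul_assoc]
  rw [hid]
  refine Submodule.sum_mem _ fun i _ => ?_
  obtain ⟨t, ht⟩ := hn (r.left i)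
  rw [← ht]
  refine Submodule.subset_span ⟨t, r.right i, ?_, rfl⟩
  have h1 : counit (R := R) (f t) = 0 := by
    rw [ht, counit_lAd, CoalgHomClass.counit_comp_apply, ha, zero_mul]
  rwa [CoalgHomClass.counit_comp_apply] at h1

end SpanLemmas

section TmulSubLemmas

open Coalgebra HopfAlgebra

variable {R B : Type*} [CommRing R] [Ring B] [Algebra R B]

lemma tmul_mem_tmulSub {M N : Submodule R B} {m n : B} (hm : m ∈ M) (hn : n ∈ N) :
    m ⊗ₜ[R] n ∈ tmulSub M N :=
  ⟨(⟨m, hm⟩ : M) ⊗ₜ[R] (⟨n, hn⟩ : N), by simp [tmulSub]⟩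

lemma mul_tmulSub_mul {M : Submodule R B}
    (hMl : ∀ (z x : B), x ∈ M → z * x ∈ M) (hMr : ∀ (z x : B), x ∈ M → x * z ∈ M)
    {t : B ⊗[R] B} (ht : t ∈ tmulSub M (⊤ : Submodule R B)) (z w : B ⊗[R] B) :
    z * t * w ∈ tmulSub M (⊤ : Submodule R B) := by
  obtain ⟨s, rfl⟩ := ht
  induction s using TensorProduct.induction_on with
  | zero => simpa using Submodule.zero_mem _
  | tmul p q =>
      simp only [TensorProduct.map_tmul, Submodule.coe_subtype]
      induction z using TensorProduct.induction_on with
      | zero => simpa using Submodule.zero_mem _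
      | tmul z1 z2 =>
          induction w using TensorProduct.induction_on with
          | zero => simpa using Submodule.zero_mem _
          | tmul w1 w2 =>
              rw [Algebra.TensorProduct.tmul_mul_tmul, Algebra.TensorProduct.tmul_mul_tmul]
              exact tmul_mem_tmulSub (hMr w1 _ (hMl z1 _ p.2)) trivial
          | add w1 w2 hw1 hw2 => rw [mul_add]; exact Submodule.add_mem _ hw1 hw2
      | add z1 z2 hz1 hz2 => rw [add_mul, add_mul]; exact Submodule.add_mem _ hz1 hz2
  | add s1 s2 hs1 hs2 =>
      rw [map_add, mul_add, add_mul]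
      exact Submodule.add_mem _ hs1 hs2

lemma mul_tmulSub_mul' {M : Submodule R B}
    (hMl : ∀ (z x : B), x ∈ M → z * x ∈ M) (hMr : ∀ (z x : B), x ∈ M → x * z ∈ M)
    {t : B ⊗[R] B} (ht : t ∈ tmulSub (⊤ : Submodule R B) M) (z w : B ⊗[R] B) :
    z * t * w ∈ tmulSub (⊤ : Submodule R B) M := by
  obtain ⟨s, rfl⟩ := ht
  induction s using TensorProduct.induction_on with
  | zero => simpa using Submodule.zero_mem _
  | tmul p q =>
      simp only [TensorProduct.map_tmul, Submodule.coe_subtype]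
      induction z using TensorProduct.induction_on with
      | zero => simpa using Submodule.zero_mem _
      | tmul z1 z2 =>
          induction w using TensorProduct.induction_on with
          | zero => simpa using Submodule.zero_mem _
          | tmul w1 w2 =>
              rw [Algebra.TensorProduct.tmul_mul_tmul, Algebra.TensorProduct.tmul_mul_tmul]
              exact tmul_mem_tmulSub trivial (hMr w2 _ (hMl z2 _ q.2))
          | add w1 w2 hw1 hw2 => rw [mul_add]; exact Submodule.add_mem _ hw1 hw2
      | add z1 z2 hz1 hz2 => rw [add_mul, add_mul]; exact Submodule.add_mem _ hz1 hz2
  | add s1 s2 hs1 hs2 =>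
      rw [map_add, mul_add, add_mul]
      exact Submodule.add_mem _ hs1 hs2

end TmulSubLemmas

section MainHelpers

open Coalgebra HopfAlgebra

variable {R A B : Type*} [CommRing R] [Ring A] [Ring B] [HopfAlgebra R A] [HopfAlgebra R B]

lemma two_eq_left (f : A →ₐc[R] B)
    (hn : ∀ (a : A) (b : B), rAd R B (f a) b ∈ Set.range f) :
    twoSidedAugSpan f = leftAugSpan f := by
  apply le_antisymm
  · rw [twoSidedAugSpan, Submodule.span_le]
    rintro x ⟨b, a, b', ha, rfl⟩
    rw [mul_assoc]
    exact left_mul_leftAug f b (key_left f a ha (fun b => hn a b) b')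
  · rw [leftAugSpan, Submodule.span_le]
    rintro x ⟨b, a, ha, rfl⟩
    rw [← mul_one (b * f a)]
    exact mem_two_gen f b a 1 ha

lemma two_eq_right (f : A →ₐc[R] B)
    (hn : ∀ (a : A) (b : B), lAd R B (f a) b ∈ Set.range f) :
    twoSidedAugSpan f = rightAugSpan f := by
  apply le_antisymm
  · rw [twoSidedAugSpan, Submodule.span_le]
    rintro x ⟨b, a, b', ha, rfl⟩
    exact right_mul_rightAug f b' (key_right f a ha (fun b => hn a b) b)
  · rw [rightAugSpan, Submodule.span_le]
    rintro x ⟨a, b, ha, rfl⟩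
    rw [← one_mul (f a)]
    exact mem_two_gen f 1 a b ha

/-- `f a' ∈ I` for `ε a' = 0`, in the convenient form `f a - ε(a) • 1`. -/
lemma sub_counit_mem (f : A →ₐc[R] B) (a : A) :
    f a - counit (R := R) a • (1 : B) ∈ twoSidedAugSpan f := by
  have h : f a - counit (R := R) a • (1 : B) =
      1 * f (a - counit (R := R) a • (1 : A)) * 1 := by
    rw [one_mul, mul_one, map_sub, map_smul, map_one]
  rw [h]
  refine mem_two_gen f 1 _ 1 ?_
  rw [map_sub, map_smul, Bialgebra.counit_one, smul_eq_mul, mul_one, sub_self]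

lemma comul_two_mem (f : A →ₐc[R] B) {x : B} (hx : x ∈ twoSidedAugSpan f) :
    Coalgebra.comul (R := R) x ∈
      tmulSub (twoSidedAugSpan f) (⊤ : Submodule R B) ⊔
        tmulSub (⊤ : Submodule R B) (twoSidedAugSpan f) := by
  classical
  induction hx using Submodule.span_induction with
  | mem x hx =>
      obtain ⟨b, a, b', ha, rfl⟩ := hx
      set ra := ℛ R a with hra
      have hsplit : Coalgebra.comul (R := R) (f a) =
          (∑ i ∈ ra.index,
            (f (ra.left i) - counit (R := R) (ra.left i) • (1 : B)) ⊗ₜ[R] f (ra.right i)) +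
            (1 : B) ⊗ₜ[R] f a := by
        rw [← (ra.mapRepr f).eq]
        have h1 : ∀ i ∈ ra.index,
            (f (ra.left i) : B) ⊗ₜ[R] f (ra.right i) =
            (f (ra.left i) - counit (R := R) (ra.left i) • (1 : B)) ⊗ₜ[R] f (ra.right i) +
              counit (R := R) (ra.left i) • ((1 : B) ⊗ₜ[R] f (ra.right i)) := by
          intro i _
          rw [TensorProduct.smul_tmul', ← TensorProduct.add_tmul, sub_add_cancel]
        rw [show ∑ i ∈ (ra.mapRepr f).index,
            (ra.mapRepr f).left i ⊗ₜ[R] (ra.mapRepr f).right i =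
            ∑ i ∈ ra.index, (f (ra.left i) : B) ⊗ₜ[R] f (ra.right i) from rfl,
          Finset.sum_congr rfl h1, Finset.sum_add_distrib]
        congr 1
        have h2 : ∀ i ∈ ra.index,
            counit (R := R) (ra.left i) • ((1 : B) ⊗ₜ[R] f (ra.right i)) =
            (1 : B) ⊗ₜ[R] f (counit (R := R) (ra.left i) • ra.right i) := by
          intro i _
          rw [map_smul, TensorProduct.tmul_smul]
        rw [Finset.sum_congr rfl h2, ← TensorProduct.tmul_sum, ← map_sum f,
          repr_sum_counit_smul_right ra]
      have hfa : f a ∈ twoSidedAugSpan f := by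
        have h3 : f a = 1 * f a * 1 := by rw [one_mul, mul_one]
        rw [h3]
        exact mem_two_gen f 1 a 1 ha
      rw [Bialgebra.comul_mul, Bialgebra.comul_mul, hsplit, mul_add, add_mul]
      refine Submodule.add_mem _ (Submodule.mem_sup_left ?_) (Submodule.mem_sup_right ?_)
      · rw [Finset.mul_sum, Finset.sum_mul]
        refine Submodule.sum_mem _ fun i _ => ?_
        exact mul_tmulSub_mul (fun z x hx => two_mul_left f z hx)
          (fun z x hx => two_mul_right f z hx)
          (tmul_mem_tmulSub (sub_counit_mem f (ra.left i)) trivial) _ _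
      · exact mul_tmulSub_mul' (fun z x hx => two_mul_left f z hx)
          (fun z x hx => two_mul_right f z hx)
          (tmul_mem_tmulSub trivial hfa) _ _
  | zero => simpa using Submodule.zero_mem _
  | add u v _ _ hu hv => rw [map_add]; exact Submodule.add_mem _ hu hv
  | smul r u _ hu => rw [map_smul]; exact Submodule.smul_mem _ r hu

end MainHelpers

section FinalHelpers

open Coalgebra HopfAlgebra

variable {R A B : Type*} [CommRing R] [Ring A] [Ring B] [HopfAlgebra R A] [HopfAlgebra R B]

lemma antipode_two_mem (f : A →ₐc[R] B) {x : B} (hx : x ∈ twoSidedAugSpan f) :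
    antipode (R := R) x ∈ twoSidedAugSpan f := by
  induction hx using Submodule.span_induction with
  | mem x hx =>
      obtain ⟨b, a, b', ha, rfl⟩ := hx
      rw [antipode_mul', antipode_mul', map_antipode', ← mul_assoc]
      refine mem_two_gen f _ _ _ ?_
      rw [counit_antipode', ha]
  | zero => simpa using Submodule.zero_mem _
  | add u v _ _ hu hv => rw [map_add]; exact Submodule.add_mem _ hu hv
  | smul r u _ hu => rw [map_smul]; exact Submodule.smul_mem _ r hu

lemma sweedlerL_gen_mem (f : A →ₐc[R] B) (a : A) (ha : counit (R := R) a = 0) (c : B) :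
    sweedlerConjL R B (f a * c) ∈
      tmulSub (twoSidedAugSpan f) (⊤ : Submodule R B) := by
  classical
  set ra := ℛ R a with hra
  set rc := ℛ R c with hrc
  let ra1 : ∀ i : ra.ι, Repr R (ra.left i) _ := fun i => ℛ R (ra.left i)
  let rc1 : ∀ j : rc.ι, Repr R (rc.left j) _ := fun j => ℛ R (rc.left j)
  have hE : sweedlerConjL R B (f a * c) =
      ∑ i ∈ ra.index, ∑ j ∈ rc.index, ∑ k ∈ (ra1 i).index, ∑ l ∈ (rc1 j).index,
        (f ((ra1 i).right k) * (rc1 j).right l) ⊗ₜ[R]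
          (antipode (R := R) (f ((ra1 i).left k) * (rc1 j).left l) *
            (f (ra.right i) * rc.right j)) := by
    rw [sweedlerConjL_repr ((ra.mapRepr f).mulRepr rc)
      (fun p => ((ra1 p.1).mapRepr f).mulRepr (rc1 p.2))]
    simp only [Coalgebra.Repr.mulRepr, Coalgebra.Repr.mapRepr, Finset.sum_product]
  have hE2 : sweedlerConjL R B (f a * c) =
      ∑ i ∈ ra.index, ∑ j ∈ rc.index, ∑ k ∈ (ra1 i).index, ∑ l ∈ (rc1 j).index,
        (f ((ra1 i).right k) * (rc1 j).right l) ⊗ₜ[R]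
          (antipode (R := R) ((rc1 j).left l) *
            (f (antipode (R := R) ((ra1 i).left k) * ra.right i) * rc.right j)) := by
    rw [hE]
    refine Finset.sum_congr rfl fun i _ => Finset.sum_congr rfl fun j _ =>
      Finset.sum_congr rfl fun k _ => Finset.sum_congr rfl fun l _ => ?_
    congr 1
    rw [antipode_mul', map_antipode', map_mul]
    simp only [mul_assoc]
  -- split each term
  have hsplit : ∀ (i : ra.ι) (j : rc.ι) (k : (ra1 i).ι) (l : (rc1 j).ι),
      (f ((ra1 i).right k) * (rc1 j).right l) ⊗ₜ[R]
        (antipode (R := R) ((rc1 j).left l) *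
          (f (antipode (R := R) ((ra1 i).left k) * ra.right i) * rc.right j)) =
      ((f ((ra1 i).right k) - counit (R := R) ((ra1 i).right k) • (1 : B)) *
          (rc1 j).right l) ⊗ₜ[R]
        (antipode (R := R) ((rc1 j).left l) *
          (f (antipode (R := R) ((ra1 i).left k) * ra.right i) * rc.right j)) +
      counit (R := R) ((ra1 i).right k) •
        ((rc1 j).right l ⊗ₜ[R]
          (antipode (R := R) ((rc1 j).left l) *
            (f (antipode (R := R) ((ra1 i).left k) * ra.right i) * rc.right j))) := by
    intro i j k l
    rw [TensorProduct.smul_tmul', ← TensorProduct.add_tmul, sub_mul, smul_mul_assoc,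
      one_mul, sub_add_cancel]
  have hZ : ∑ i ∈ ra.index, ∑ k ∈ (ra1 i).index,
      counit (R := R) ((ra1 i).right k) •
        (antipode (R := R) ((ra1 i).left k) * ra.right i) = 0 := by
    have hin : ∀ i ∈ ra.index,
        ∑ k ∈ (ra1 i).index, counit (R := R) ((ra1 i).right k) •
          (antipode (R := R) ((ra1 i).left k) * ra.right i) =
        antipode (R := R) (ra.left i) * ra.right i := by
      intro i _
      have h4 : ∀ k ∈ (ra1 i).index,
          counit (R := R) ((ra1 i).right k) •
            (antipode (R := R) ((ra1 i).left k) * ra.right i) =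
          (antipode (R := R) (counit (R := R) ((ra1 i).right k) • (ra1 i).left k)) *
            ra.right i := by
        intro k _; rw [map_smul, smul_mul_assoc]
      rw [Finset.sum_congr rfl h4, ← Finset.sum_mul, ← map_sum,
        repr_sum_counit_smul_left (ra1 i)]
    rw [Finset.sum_congr rfl hin, sum_antipode_mul_eq_algebraMap_counit ra, ha, map_zero]
  have hT2 : ∑ i ∈ ra.index, ∑ j ∈ rc.index, ∑ k ∈ (ra1 i).index, ∑ l ∈ (rc1 j).index,
      counit (R := R) ((ra1 i).right k) •
        ((rc1 j).right l ⊗ₜ[R]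
          (antipode (R := R) ((rc1 j).left l) *
            (f (antipode (R := R) ((ra1 i).left k) * ra.right i) * rc.right j))) = 0 := by
    rw [sum4_swap_mid ra.index rc.index (fun i => (ra1 i).index) (fun j => (rc1 j).index),
      sum4_swap_pairs ra.index rc.index (fun i => (ra1 i).index) (fun j => (rc1 j).index)]
    refine Finset.sum_eq_zero fun j _ => Finset.sum_eq_zero fun l _ => ?_
    calc ∑ i ∈ ra.index, ∑ k ∈ (ra1 i).index,
          counit (R := R) ((ra1 i).right k) •
            ((rc1 j).right l ⊗ₜ[R]
              (antipode (R := R) ((rc1 j).left l) *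
                (f (antipode (R := R) ((ra1 i).left k) * ra.right i) * rc.right j)))
        = (rc1 j).right l ⊗ₜ[R]
            (antipode (R := R) ((rc1 j).left l) *
              (f (∑ i ∈ ra.index, ∑ k ∈ (ra1 i).index,
                counit (R := R) ((ra1 i).right k) •
                  (antipode (R := R) ((ra1 i).left k) * ra.right i)) * rc.right j)) := by
          rw [map_sum f, Finset.sum_mul, Finset.mul_sum, TensorProduct.tmul_sum]
          refine Finset.sum_congr rfl fun i _ => ?_
          rw [map_sum f, Finset.sum_mul, Finset.mul_sum, TensorProduct.tmul_sum]
          refine Finset.sum_congr rfl fun k _ => ?_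
          rw [map_smul, smul_mul_assoc, mul_smul_comm, TensorProduct.tmul_smul]
      _ = 0 := by rw [hZ, map_zero, zero_mul, mul_zero, TensorProduct.tmul_zero]
  rw [hE2, Finset.sum_congr rfl fun i _ => Finset.sum_congr rfl fun j _ =>
    Finset.sum_congr rfl fun k _ => Finset.sum_congr rfl fun l _ => hsplit i j k l]
  simp only [Finset.sum_add_distrib]
  rw [hT2, add_zero]
  refine Submodule.sum_mem _ fun i _ => Submodule.sum_mem _ fun j _ =>
    Submodule.sum_mem _ fun k _ => Submodule.sum_mem _ fun l _ => ?_
  refine tmul_mem_tmulSub ?_ trivial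
  exact two_mul_right f _ (sub_counit_mem f ((ra1 i).right k))

end FinalHelpers

section FinalHelpers2

open Coalgebra HopfAlgebra

variable {R A B : Type*} [CommRing R] [Ring A] [Ring B] [HopfAlgebra R A] [HopfAlgebra R B]

lemma sweedlerR_gen_mem (f : A →ₐc[R] B) (a : A) (ha : counit (R := R) a = 0) (c : B) :
    sweedlerConjR R B (c * f a) ∈
      tmulSub (twoSidedAugSpan f) (⊤ : Submodule R B) := by
  classical
  set ra := ℛ R a with hra
  set rc := ℛ R c with hrc
  let ra1 : ∀ i : ra.ι, Repr R (ra.left i) _ := fun i => ℛ R (ra.left i)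
  let rc1 : ∀ j : rc.ι, Repr R (rc.left j) _ := fun j => ℛ R (rc.left j)
  have hE : sweedlerConjR R B (c * f a) =
      ∑ j ∈ rc.index, ∑ i ∈ ra.index, ∑ l ∈ (rc1 j).index, ∑ k ∈ (ra1 i).index,
        ((rc1 j).right l * f ((ra1 i).right k)) ⊗ₜ[R]
          (((rc1 j).left l * f ((ra1 i).left k)) *
            antipode (R := R) (rc.right j * f (ra.right i))) := by
    rw [sweedlerConjR_repr (rc.mulRepr (ra.mapRepr f))
      (fun p => (rc1 p.1).mulRepr ((ra1 p.2).mapRepr f))]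
    simp only [Coalgebra.Repr.mulRepr, Coalgebra.Repr.mapRepr, Finset.sum_product]
  have hE2 : sweedlerConjR R B (c * f a) =
      ∑ j ∈ rc.index, ∑ i ∈ ra.index, ∑ l ∈ (rc1 j).index, ∑ k ∈ (ra1 i).index,
        ((rc1 j).right l * f ((ra1 i).right k)) ⊗ₜ[R]
          ((rc1 j).left l *
            (f ((ra1 i).left k * antipode (R := R) (ra.right i)) *
              antipode (R := R) (rc.right j))) := by
    rw [hE]
    refine Finset.sum_congr rfl fun j _ => Finset.sum_congr rfl fun i _ =>
      Finset.sum_congr rfl fun l _ => Finset.sum_congr rfl fun k _ => ?_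
    congr 1
    rw [antipode_mul', map_antipode', map_mul]
    simp only [mul_assoc]
  have hsplit : ∀ (j : rc.ι) (i : ra.ι) (l : (rc1 j).ι) (k : (ra1 i).ι),
      ((rc1 j).right l * f ((ra1 i).right k)) ⊗ₜ[R]
        ((rc1 j).left l *
          (f ((ra1 i).left k * antipode (R := R) (ra.right i)) *
            antipode (R := R) (rc.right j))) =
      ((rc1 j).right l * (f ((ra1 i).right k) - counit (R := R) ((ra1 i).right k) • (1 : B)))
          ⊗ₜ[R]
        ((rc1 j).left l *
          (f ((ra1 i).left k * antipode (R := R) (ra.right i)) *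
            antipode (R := R) (rc.right j))) +
      counit (R := R) ((ra1 i).right k) •
        ((rc1 j).right l ⊗ₜ[R]
          ((rc1 j).left l *
            (f ((ra1 i).left k * antipode (R := R) (ra.right i)) *
              antipode (R := R) (rc.right j)))) := by
    intro j i l k
    rw [TensorProduct.smul_tmul', ← TensorProduct.add_tmul, mul_sub, mul_smul_comm,
      mul_one, sub_add_cancel]
  have hZ : ∑ i ∈ ra.index, ∑ k ∈ (ra1 i).index,
      counit (R := R) ((ra1 i).right k) •
        ((ra1 i).left k * antipode (R := R) (ra.right i)) = 0 := by
    have hin : ∀ i ∈ ra.index,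
        ∑ k ∈ (ra1 i).index, counit (R := R) ((ra1 i).right k) •
          ((ra1 i).left k * antipode (R := R) (ra.right i)) =
        ra.left i * antipode (R := R) (ra.right i) := by
      intro i _
      have h4 : ∀ k ∈ (ra1 i).index,
          counit (R := R) ((ra1 i).right k) •
            ((ra1 i).left k * antipode (R := R) (ra.right i)) =
          (counit (R := R) ((ra1 i).right k) • (ra1 i).left k) *
            antipode (R := R) (ra.right i) := by
        intro k _; rw [smul_mul_assoc]
      rw [Finset.sum_congr rfl h4, ← Finset.sum_mul, repr_sum_counit_smul_left (ra1 i)]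
    rw [Finset.sum_congr rfl hin, sum_mul_antipode_eq_algebraMap_counit ra, ha, map_zero]
  have hT2 : ∑ j ∈ rc.index, ∑ i ∈ ra.index, ∑ l ∈ (rc1 j).index, ∑ k ∈ (ra1 i).index,
      counit (R := R) ((ra1 i).right k) •
        ((rc1 j).right l ⊗ₜ[R]
          ((rc1 j).left l *
            (f ((ra1 i).left k * antipode (R := R) (ra.right i)) *
              antipode (R := R) (rc.right j)))) = 0 := by
    refine Finset.sum_eq_zero fun j _ => ?_
    rw [Finset.sum_comm]
    refine Finset.sum_eq_zero fun l _ => ?_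
    calc ∑ i ∈ ra.index, ∑ k ∈ (ra1 i).index,
          counit (R := R) ((ra1 i).right k) •
            ((rc1 j).right l ⊗ₜ[R]
              ((rc1 j).left l *
                (f ((ra1 i).left k * antipode (R := R) (ra.right i)) *
                  antipode (R := R) (rc.right j))))
        = (rc1 j).right l ⊗ₜ[R]
            ((rc1 j).left l *
              (f (∑ i ∈ ra.index, ∑ k ∈ (ra1 i).index,
                counit (R := R) ((ra1 i).right k) •
                  ((ra1 i).left k * antipode (R := R) (ra.right i))) *
                antipode (R := R) (rc.right j))) := by
          rw [map_sum f, Finset.sum_mul, Finset.mul_sum, TensorProduct.tmul_sum]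
          refine Finset.sum_congr rfl fun i _ => ?_
          rw [map_sum f, Finset.sum_mul, Finset.mul_sum, TensorProduct.tmul_sum]
          refine Finset.sum_congr rfl fun k _ => ?_
          rw [map_smul, smul_mul_assoc, mul_smul_comm, TensorProduct.tmul_smul]
      _ = 0 := by rw [hZ, map_zero, zero_mul, mul_zero, TensorProduct.tmul_zero]
  rw [hE2, Finset.sum_congr rfl fun j _ => Finset.sum_congr rfl fun i _ =>
    Finset.sum_congr rfl fun l _ => Finset.sum_congr rfl fun k _ => hsplit j i l k]
  simp only [Finset.sum_add_distrib]
  rw [hT2, add_zero]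
  refine Submodule.sum_mem _ fun j _ => Submodule.sum_mem _ fun i _ =>
    Submodule.sum_mem _ fun l _ => Submodule.sum_mem _ fun k _ => ?_
  refine tmul_mem_tmulSub ?_ trivial
  exact two_mul_left f _ (sub_counit_mem f ((ra1 i).right k))

end FinalHelpers2

/-- **Lemma.** Let `R` be a Dedekind domain and `f : A → B` a normal homomorphism
of `R`-flat Hopf algebras. Then `I := B f(A)⁺ B` satisfies
`I = B f(A)⁺ = f(A)⁺ B`, and `I` is a normal Hopf ideal of `B`: `ε(I) = 0`,
`Δ(I) ⊆ I ⊗ B + B ⊗ I`, `S(I) ⊆ I`, and for all `a ∈ I` both `∑ a₂ ⊗ S(a₁)a₃`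
and `∑ a₂ ⊗ a₁S(a₃)` lie in the image of `I ⊗ B` in `B ⊗ B`. -/
theorem normal_hom_gives_normal_hopf_ideal
    (R A B : Type*) [CommRing R] [IsDomain R] [IsDedekindDomain R]
    [Ring A] [Ring B] [HopfAlgebra R A] [HopfAlgebra R B]
    [Module.Flat R A] [Module.Flat R B]
    (f : A →ₐc[R] B)
    (hnormal : ∀ (a : A) (b : B),
      lAd R B (f a) b ∈ Set.range f ∧ rAd R B (f a) b ∈ Set.range f) :
    twoSidedAugSpan f = leftAugSpan f ∧
    twoSidedAugSpan f = rightAugSpan f ∧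
    (∀ x ∈ twoSidedAugSpan f, (Coalgebra.counit : B →ₗ[R] R) x = 0) ∧
    (∀ x ∈ twoSidedAugSpan f, (Coalgebra.comul : B →ₗ[R] B ⊗[R] B) x ∈
      tmulSub (twoSidedAugSpan f) (⊤ : Submodule R B) ⊔
        tmulSub (⊤ : Submodule R B) (twoSidedAugSpan f)) ∧
    (∀ x ∈ twoSidedAugSpan f, (HopfAlgebra.antipode R : B →ₗ[R] B) x ∈ twoSidedAugSpan f) ∧
    (∀ x ∈ twoSidedAugSpan f,
      sweedlerConjL R B x ∈ tmulSub (twoSidedAugSpan f) (⊤ : Submodule R B) ∧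
      sweedlerConjR R B x ∈ tmulSub (twoSidedAugSpan f) (⊤ : Submodule R B)) := by
  have hL : twoSidedAugSpan f = leftAugSpan f := two_eq_left f (fun a b => (hnormal a b).2)
  have hR : twoSidedAugSpan f = rightAugSpan f := two_eq_right f (fun a b => (hnormal a b).1)
  refine ⟨hL, hR, fun x hx => counit_two f hx, fun x hx => comul_two_mem f hx,
    fun x hx => antipode_two_mem f hx, fun x hx => ⟨?_, ?_⟩⟩
  · rw [hR] at hx
    induction hx using Submodule.span_induction with
    | mem x hx =>
        obtain ⟨a, c, ha, rfl⟩ := hx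
        exact sweedlerL_gen_mem f a ha c
    | zero => simpa using Submodule.zero_mem _
    | add u v _ _ hu hv => rw [map_add]; exact Submodule.add_mem _ hu hv
    | smul r u _ hu => rw [map_smul]; exact Submodule.smul_mem _ r hu
  · rw [hL] at hx
    induction hx using Submodule.span_induction with
    | mem x hx =>
        obtain ⟨b, a, ha, rfl⟩ := hx
        exact sweedlerR_gen_mem f a ha b
    | zero => simpa using Submodule.zero_mem _
    | add u v _ _ hu hv => rw [map_add]; exact Submodule.add_mem _ hu hv
    | smul r u _ hu => rw [map_smul]; exact Submodule.smul_mem _ r hu
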